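/- Let a > 0, b ≥ 0, d < 0, and set f(x) = (2−a)x − b, x_Δ^± = (−b ± 2√(−d))/a. Suppose f(x_Δ^+) < 0 (equivalently b > (2−a)√(−d)). Then: (1) if a ≠ 1 the discriminant b² − 4d(a−1) is positive, so x_g^± = (−b ± √(b²−4d(a−1)))/(2(a−1)) are real (and for a = 1 one has b ≠ 0 so x_g^± := −d/b is defined); (2) x_g^+ > x_Δ^+; and (3) if additionally f(x_Δ^−) > 0, then x_g^− < x_Δ^−. -/

import Mathlib

set_option maxHeartbeats 1000000 in
open Classical in
theorem stmt11 (a b d : ℝ) (ha : 0 < a) (hb : 0 ≤ b) (hd : d < 0)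
    (hf : (2 - a) * ((-b + 2 * Real.sqrt (-d)) / a) - b < 0) :
    ((a ≠ 1 → 0 < b ^ 2 - 4 * d * (a - 1)) ∧ (a = 1 → b ≠ 0)) ∧
    (let xgp := if a = 1 then -d / b
      else (-b + Real.sqrt (b ^ 2 - 4 * d * (a - 1))) / (2 * (a - 1))
     let xgm := if a = 1 then -d / b
      else (-b - Real.sqrt (b ^ 2 - 4 * d * (a - 1))) / (2 * (a - 1))
     ((-b + 2 * Real.sqrt (-d)) / a < xgp ∧
      (0 < (2 - a) * ((-b - 2 * Real.sqrt (-d)) / a) - b →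
        xgm < (-b - 2 * Real.sqrt (-d)) / a))) := by
  have hd0 : (0:ℝ) < -d := by linarith
  set s := Real.sqrt (-d) with hs_def
  have hs : 0 < s := Real.sqrt_pos.mpr hd0
  have hs2 : s ^ 2 = -d := Real.sq_sqrt hd0.le
  -- clear denominator in hf
  have h1 : (2 - a) * (-b + 2 * s) - b * a < 0 := by
    by_contra hc
    push_neg at hc
    have h2 : (0:ℝ) ≤ ((2 - a) * (-b + 2 * s) - b * a) / a := div_nonneg hc ha.le
    rw [show ((2 - a) * (-b + 2 * s) - b * a) / a
        = (2 - a) * ((-b + 2 * s) / a) - b by field_simp] at h2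
    linarith
  have hbs : (2 - a) * s < b := by nlinarith [h1]
  have hdisc : a ≠ 1 → 0 < b ^ 2 - 4 * d * (a - 1) := by
    intro h1'
    rcases lt_or_gt_of_ne h1' with hlt | hgt
    · have h2a : (0:ℝ) < 2 - a := by linarith
      nlinarith [hbs, mul_pos h2a hs, mul_pos (mul_pos ha ha) (mul_pos hs hs), hs2]
    · nlinarith [sq_nonneg b, mul_pos hs hs, hs2]
  have hb1 : a = 1 → b ≠ 0 := by
    intro h1'
    have hsb : s < b := by
      have := hbs; rw [h1'] at this; linarith
    exact ne_of_gt (hs.trans hsb)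
  refine ⟨⟨hdisc, hb1⟩, ?_⟩
  by_cases ha1 : a = 1
  · subst ha1
    simp only [if_pos rfl, if_true, div_one]
    have hsb : s < b := by linarith [hbs]
    have hbpos : 0 < b := hs.trans hsb
    constructor
    · rw [lt_div_iff₀ hbpos]
      nlinarith [sq_nonneg (s - b), hs2]
    · intro hcon
      exfalso
      nlinarith [hcon, hs, hb]
  · simp only [if_neg ha1]
    have hD0 : 0 < b ^ 2 - 4 * d * (a - 1) := hdisc ha1
    set D := Real.sqrt (b ^ 2 - 4 * d * (a - 1)) with hD_def
    have hDpos : 0 < D := Real.sqrt_pos.mpr hD0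
    have hD2 : D ^ 2 = b ^ 2 - 4 * d * (a - 1) := Real.sq_sqrt hD0.le
    constructor
    · -- xΔ+ < xg+
      set t := (-b + 2 * s) / a with ht
      have hat : a * t + b = 2 * s := by
        rw [ht]; field_simp; ring
      have hft : (2 - a) * t - b < 0 := hf
      have h4 : (a * t + b) ^ 2 = -4 * d := by
        rw [hat]; nlinarith [hs2]
      have hgt : 0 < (1 - a) * t ^ 2 - b * t - d := by
        nlinarith [h4, mul_pos (neg_pos.mpr hft) (neg_pos.mpr hft)]
      rcases lt_or_gt_of_ne ha1 with hlt | hgt1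
      · -- a < 1
        have hX' : a * (2 * (a - 1) * t + b) = (2 - a) * b - 4 * (1 - a) * s := by
          linear_combination (2 * (a - 1)) * hat
        have hXp : 0 < (2 - a) * b - 4 * (1 - a) * s := by
          nlinarith [mul_pos (show (0:ℝ) < 2 - a by linarith) hs, hbs,
            mul_pos (mul_pos ha ha) hs]
        have hX : 0 < 2 * (a - 1) * t + b := by nlinarith [hX', hXp, ha]
        have hkey : D ^ 2 < (2 * (a - 1) * t + b) ^ 2 := by
          rw [hD2]; nlinarith [mul_pos (show (0:ℝ) < 1 - a by linarith) hgt]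
        have hDX : D < 2 * (a - 1) * t + b := by
          nlinarith [hDpos, hkey, hX]
        rw [lt_div_iff_of_neg (by linarith : 2 * (a - 1) < 0)]
        linarith
      · -- a > 1
        have hkey : (2 * (a - 1) * t + b) ^ 2 < D ^ 2 := by
          rw [hD2]; nlinarith [mul_pos (show (0:ℝ) < a - 1 by linarith) hgt]
        have hXD : 2 * (a - 1) * t + b < D := by
          nlinarith [hDpos, hkey]
        rw [lt_div_iff₀ (by linarith : (0:ℝ) < 2 * (a - 1))]
        linarith
    · -- second part
      intro hfm
      set u := (-b - 2 * s) / a with hu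
      have hau : a * u + b = -2 * s := by
        rw [hu]; field_simp; ring
      have h2 : 0 < (2 - a) * (-b - 2 * s) - b * a := by
        by_contra hc
        push_neg at hc
        have h3 : ((2 - a) * (-b - 2 * s) - b * a) / a ≤ 0 :=
          div_nonpos_of_nonpos_of_nonneg hc ha.le
        rw [show ((2 - a) * (-b - 2 * s) - b * a) / a
            = (2 - a) * ((-b - 2 * s) / a) - b by field_simp] at h3
        rw [← hu] at h3
        linarith [hfm]
      have ha2 : 2 < a := by nlinarith [h2, hs, hb]
      have hfu : 0 < (2 - a) * u - b := by
        have : (2 - a) * u - b = ((2 - a) * (-b - 2 * s) - b * a) / a := by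
          rw [hu]; field_simp
        rw [this]; exact div_pos h2 ha
      have h4 : (a * u + b) ^ 2 = -4 * d := by
        rw [hau]; nlinarith [hs2]
      have hgu : 0 < (1 - a) * u ^ 2 - b * u - d := by
        nlinarith [h4, mul_pos hfu hfu]
      have hkey : (2 * (a - 1) * u + b) ^ 2 < D ^ 2 := by
        rw [hD2]; nlinarith [mul_pos (show (0:ℝ) < a - 1 by linarith) hgu]
      have hXD : -(2 * (a - 1) * u + b) < D := by
        nlinarith [hDpos, hkey]
      rw [div_lt_iff₀ (by linarith : (0:ℝ) < 2 * (a - 1))]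
      linarith
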